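/- Let k01, k10 : ℝ → ℝ be continuous nonnegative functions with K = k01 + k10 strictly positive on a compact interval [a,b], let ν = min_{v ∈ [a,b]} K(v), and let V : ℝ → ℝ be piecewise continuous with V_t ∈ [a,b] for all t. If P¹ and P² are two solutions of Ṗ_t = k01(V_t) − K(V_t)·P_t on [t₀, ∞) driven by the same input V but with different initial values, then |P¹_t − P²_t| = Φ_{t,t₀}·|P¹_{t₀} − P²_{t₀}| ≤ e^{−ν(t−t₀)}·|P¹_{t₀} − P²_{t₀}| for all t ≥ t₀; hence for every fixed t, |P¹_t − P²_t| → 0 as t₀ → −∞. -/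

import Mathlib

/-- A function `V : ℝ → ℝ` is piecewise continuous: it is measurable, bounded on
compact intervals, and on every compact interval it is continuous except possibly
at finitely many points. -/
def PiecewiseContinuous (V : ℝ → ℝ) : Prop :=
  Measurable V ∧
  (∀ a b : ℝ, Bornology.IsBounded (V '' Set.Icc a b)) ∧
  (∀ a b : ℝ, a < b → ∃ s : Finset ℝ,
      ∀ x ∈ Set.Ioo a b \ (s : Set ℝ), ContinuousAt V x)

/-- If a function is continuous on `[c,d]` and has zero derivative on `(c,d)` minus a
finite set, then it is constant on `[c,d]`. -/
lemma dms_const_of_deriv_zero_off_finite (g : ℝ → ℝ) :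
    ∀ (S : Finset ℝ) (c d : ℝ), c ≤ d → ContinuousOn g (Set.Icc c d) →
      (∀ x ∈ Set.Ioo c d \ (S : Set ℝ), HasDerivAt g 0 x) → g d = g c := by
  intro S
  induction S using Finset.strongInduction with
  | _ S ih =>
    intro c d hcd hg h
    by_cases hS : ∃ p ∈ S, p ∈ Set.Ioo c d
    · obtain ⟨p, hpS, hp⟩ := hS
      have h1 : g p = g c := by
        refine ih (S.erase p) (Finset.erase_ssubset hpS) c p hp.1.le
          (hg.mono (Set.Icc_subset_Icc le_rfl hp.2.le)) ?_
        rintro x ⟨hx, hxS⟩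
        refine h x ⟨⟨hx.1, hx.2.trans hp.2⟩, fun hxS' => hxS ?_⟩
        exact Finset.mem_coe.2 (Finset.mem_erase.2 ⟨ne_of_lt hx.2, hxS'⟩)
      have h2 : g d = g p := by
        refine ih (S.erase p) (Finset.erase_ssubset hpS) p d hp.2.le
          (hg.mono (Set.Icc_subset_Icc hp.1.le le_rfl)) ?_
        rintro x ⟨hx, hxS⟩
        refine h x ⟨⟨hp.1.trans hx.1, hx.2⟩, fun hxS' => hxS ?_⟩
        exact Finset.mem_coe.2 (Finset.mem_erase.2 ⟨(ne_of_lt hx.1).symm, hxS'⟩)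
      exact h2.trans h1
    · push_neg at hS
      have hd : ∀ x ∈ interior (Set.Icc c d), HasDerivAt g 0 x := by
        intro x hx
        rw [interior_Icc] at hx
        exact h x ⟨hx, fun hxS => hS x hxS hx⟩
      have hmono : MonotoneOn g (Set.Icc c d) :=
        monotoneOn_of_hasDerivWithinAt_nonneg (convex_Icc c d) hg
          (f' := fun _ => 0) (fun x hx => (hd x hx).hasDerivWithinAt) (fun _ _ => le_refl 0)
      have hanti : AntitoneOn g (Set.Icc c d) :=
        antitoneOn_of_hasDerivWithinAt_nonpos (convex_Icc c d) hg
          (f' := fun _ => 0) (fun x hx => (hd x hx).hasDerivWithinAt) (fun _ _ => le_refl 0)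
      exact le_antisymm (hanti ⟨le_rfl, hcd⟩ ⟨hcd, le_rfl⟩ hcd)
        (hmono ⟨le_rfl, hcd⟩ ⟨hcd, le_rfl⟩ hcd)

/-- convergence part of Theorem 1: two solutions of
`Ṗ_t = k01(V_t) − K(V_t)·P_t` driven by the same `[a,b]`-valued input but with
different initial values satisfy
`|P¹_t − P²_t| = Φ_{t,t₀}·|P¹_{t₀} − P²_{t₀}| ≤ e^{−ν(t−t₀)}·|P¹_{t₀} − P²_{t₀}|`;
hence (for families of solutions with uniformly bounded initial gaps started at
time `s`) the difference at any fixed time `t` tends to `0` as `s → −∞`. -/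
theorem dms_exponential_contraction
    (k01 k10 K : ℝ → ℝ)
    (hk01c : Continuous k01) (hk10c : Continuous k10)
    (hk01 : ∀ v, 0 ≤ k01 v) (hk10 : ∀ v, 0 ≤ k10 v)
    (hK : ∀ v, K v = k01 v + k10 v)
    (a b ν : ℝ) (hab : a ≤ b)
    (hKpos : ∀ v ∈ Set.Icc a b, 0 < K v)
    (hν : IsLeast (K '' Set.Icc a b) ν)
    (V : ℝ → ℝ) (hV : PiecewiseContinuous V) (hVab : ∀ t, V t ∈ Set.Icc a b)
    (Φ : ℝ → ℝ → ℝ) (hΦ : ∀ t τ, Φ t τ = Real.exp (-∫ s in τ..t, K (V s))) :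
    (∀ (t₀ : ℝ) (P₁ P₂ : ℝ → ℝ),
      (∀ t ∈ Set.Ici t₀, HasDerivAt P₁ (k01 (V t) - K (V t) * P₁ t) t) →
      (∀ t ∈ Set.Ici t₀, HasDerivAt P₂ (k01 (V t) - K (V t) * P₂ t) t) →
      ∀ t ∈ Set.Ici t₀,
        |P₁ t - P₂ t| = Φ t t₀ * |P₁ t₀ - P₂ t₀| ∧
        |P₁ t - P₂ t| ≤ Real.exp (-ν * (t - t₀)) * |P₁ t₀ - P₂ t₀|) ∧
    (∀ Q₁ Q₂ : ℝ → ℝ → ℝ,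
      (∀ s : ℝ, ∀ t ∈ Set.Ici s, HasDerivAt (Q₁ s) (k01 (V t) - K (V t) * Q₁ s t) t) →
      (∀ s : ℝ, ∀ t ∈ Set.Ici s, HasDerivAt (Q₂ s) (k01 (V t) - K (V t) * Q₂ s t) t) →
      (∃ C : ℝ, ∀ s : ℝ, |Q₁ s s - Q₂ s s| ≤ C) →
      ∀ t : ℝ, Filter.Tendsto (fun s => Q₁ s t - Q₂ s t) Filter.atBot (nhds 0)) := by
  have hKc : Continuous K := by
    have hKeq : K = fun v => k01 v + k10 v := funext hK
    rw [hKeq]; exact hk01c.add hk10c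
  obtain ⟨v₀, hv₀, hv₀ν⟩ := hν.1
  have hνpos : 0 < ν := hv₀ν ▸ hKpos v₀ hv₀
  obtain ⟨M, hM⟩ := (isCompact_Icc (a := a) (b := b)).exists_bound_of_continuousOn
    hKc.continuousOn
  have hmeas : Measurable fun s => K (V s) := hKc.measurable.comp hV.1
  have hint : ∀ c d : ℝ, IntervalIntegrable (fun s => K (V s)) MeasureTheory.volume c d := by
    intro c d
    rw [intervalIntegrable_iff]
    refine MeasureTheory.Measure.integrableOn_of_bounded (M := M) (measure_Ioc_lt_top).ne
      hmeas.aestronglyMeasurable (MeasureTheory.ae_of_all _ fun x => ?_)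
    exact hM (V x) (hVab x)
  have key : ∀ (t₀ : ℝ) (P₁ P₂ : ℝ → ℝ),
      (∀ t ∈ Set.Ici t₀, HasDerivAt P₁ (k01 (V t) - K (V t) * P₁ t) t) →
      (∀ t ∈ Set.Ici t₀, HasDerivAt P₂ (k01 (V t) - K (V t) * P₂ t) t) →
      ∀ t ∈ Set.Ici t₀,
        |P₁ t - P₂ t| = Φ t t₀ * |P₁ t₀ - P₂ t₀| ∧
        |P₁ t - P₂ t| ≤ Real.exp (-ν * (t - t₀)) * |P₁ t₀ - P₂ t₀| := by
    intro t₀ P₁ P₂ h₁ h₂ t ht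
    rw [Set.mem_Ici] at ht
    set F : ℝ → ℝ := fun u => ∫ s in t₀..u, K (V s) with hF
    have hFc : Continuous F := intervalIntegral.continuous_primitive hint t₀
    have hDeq : P₁ t - P₂ t = Real.exp (-(F t)) * (P₁ t₀ - P₂ t₀) := by
      rcases eq_or_lt_of_le ht with rfl | hlt
      · simp [hF, intervalIntegral.integral_same]
      · obtain ⟨S, hS⟩ := hV.2.2 t₀ t hlt
        have hgc : ContinuousOn (fun u => (P₁ u - P₂ u) * Real.exp (F u)) (Set.Icc t₀ t) := by
          intro x hx
          exact (((h₁ x hx.1).continuousAt.sub (h₂ x hx.1).continuousAt).mul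
            ((Real.continuous_exp.comp hFc).continuousAt)).continuousWithinAt
        have hderiv : ∀ x ∈ Set.Ioo t₀ t \ (S : Set ℝ),
            HasDerivAt (fun u => (P₁ u - P₂ u) * Real.exp (F u)) 0 x := by
          rintro x ⟨hx, hxS⟩
          have hVx : ContinuousAt V x := hS x ⟨hx, hxS⟩
          have hKVx : ContinuousAt (fun s => K (V s)) x := hKc.continuousAt.comp hVx
          have hFd : HasDerivAt F (K (V x)) x :=
            intervalIntegral.integral_hasDerivAt_right (hint t₀ x)
              hmeas.aestronglyMeasurable.stronglyMeasurableAtFilter hKVx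
          have hED : HasDerivAt (fun u => Real.exp (F u)) (Real.exp (F x) * K (V x)) x :=
            hFd.exp
          have hD : HasDerivAt (fun u => P₁ u - P₂ u)
              ((k01 (V x) - K (V x) * P₁ x) - (k01 (V x) - K (V x) * P₂ x)) x :=
            (h₁ x hx.1.le).sub (h₂ x hx.1.le)
          have hprod : HasDerivAt (fun u => (P₁ u - P₂ u) * Real.exp (F u)) _ x := hD.mul hED
          convert hprod using 1
          ring
        have hgeq := dms_const_of_deriv_zero_off_finite
          (fun u => (P₁ u - P₂ u) * Real.exp (F u)) S t₀ t ht hgc hderiv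
        simp only [hF] at hgeq
        rw [intervalIntegral.integral_same, Real.exp_zero, mul_one] at hgeq
        rw [Real.exp_neg, eq_inv_mul_iff_mul_eq₀ (Real.exp_pos _).ne']
        linear_combination hgeq
    have hΦpos : 0 < Φ t t₀ := by rw [hΦ]; exact Real.exp_pos _
    have hΦeq : Φ t t₀ = Real.exp (-(F t)) := hΦ t t₀
    constructor
    · rw [hDeq, abs_mul, abs_of_pos (Real.exp_pos _), hΦeq]
    · have hmono : ∫ s in t₀..t, (ν : ℝ) ≤ ∫ s in t₀..t, K (V s) :=
        intervalIntegral.integral_mono_on ht intervalIntegrable_const (hint t₀ t)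
          (fun x _ => hν.2 ⟨V x, hVab x, rfl⟩)
      rw [intervalIntegral.integral_const, smul_eq_mul] at hmono
      have hexp : Real.exp (-(F t)) ≤ Real.exp (-ν * (t - t₀)) := by
        apply Real.exp_le_exp.2
        simp only [hF]
        nlinarith [hmono]
      rw [hDeq, abs_mul, abs_of_pos (Real.exp_pos _)]
      exact mul_le_mul_of_nonneg_right hexp (abs_nonneg _)
  refine ⟨key, ?_⟩
  rintro Q₁ Q₂ hQ₁ hQ₂ ⟨C, hC⟩ t
  have hbound : ∀ s ≤ t, |Q₁ s t - Q₂ s t| ≤ Real.exp (-ν * (t - s)) * C := by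
    intro s hs
    calc |Q₁ s t - Q₂ s t| ≤ Real.exp (-ν * (t - s)) * |Q₁ s s - Q₂ s s| :=
          (key s (Q₁ s) (Q₂ s) (hQ₁ s) (hQ₂ s) t hs).2
      _ ≤ Real.exp (-ν * (t - s)) * C :=
          mul_le_mul_of_nonneg_left (hC s) (Real.exp_pos _).le
  have htend : Filter.Tendsto (fun s => Real.exp (-ν * (t - s)) * C)
      Filter.atBot (nhds 0) := by
    have h1 : Filter.Tendsto (fun s : ℝ => -ν * (t - s)) Filter.atBot Filter.atBot := by
      have heq : (fun s : ℝ => -ν * (t - s)) = fun s : ℝ => ν * s + -(ν * t) := by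
        funext s; ring
      rw [heq]
      exact Filter.tendsto_atBot_add_const_right _ _
        (Filter.Tendsto.const_mul_atBot hνpos Filter.tendsto_id)
    have h2 := (Real.tendsto_exp_atBot.comp h1).mul_const C
    simpa using h2
  refine squeeze_zero_norm' ?_ htend
  filter_upwards [Filter.eventually_le_atBot t] with s hs
  simpa [Real.norm_eq_abs] using hbound s hs
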